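/- The rotational shape functions Nx2 and Nx3 satisfy the Kronecker delta property: Nx2(Pj) = Nx3(Pj) = 0 for j = 1,2,3; ∂Nx2/∂x(Pj) = ∂Nx3/∂x(Pj) = 0 for j = 1,2,3; ∂Nx2/∂y(P2) = 1 and ∂Nx2/∂y(P1) = ∂Nx2/∂y(P3) = 0; ∂Nx3/∂y(P3) = 1 and ∂Nx3/∂y(P1) = ∂Nx3/∂y(P2) = 0. -/

import Mathlib

noncomputable section

/-- Area coordinate `L1(x,y) = 1 - x/a - y/b`. -/
def L1 (a b : ℝ) (x y : ℝ) : ℝ := 1 - x / a - y / b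

/-- Area coordinate `L2(x,y) = x/a - (1/h - 1/b)·y`. -/
def L2 (a h b : ℝ) (x y : ℝ) : ℝ := x / a - (1 / h - 1 / b) * y

/-- Area coordinate `L3(x,y) = y/h`. -/
def L3 (h : ℝ) (x y : ℝ) : ℝ := y / h

/-- Rotational shape function `Nx2 = h·(L2²L3 + ½L1L2L3)`. -/
def Nx2 (a h b : ℝ) (x y : ℝ) : ℝ :=
  h * ((L2 a h b x y) ^ 2 * L3 h x y + (1 / 2) * L1 a b x y * L2 a h b x y * L3 h x y)

/-- Rotational shape function `Nx3 = -h·(L3²L1 + L2L3² + L1L2L3)`. -/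
def Nx3 (a h b : ℝ) (x y : ℝ) : ℝ :=
  -h * ((L3 h x y) ^ 2 * L1 a b x y + L2 a h b x y * (L3 h x y) ^ 2
    + L1 a b x y * L2 a h b x y * L3 h x y)

/-- Partial derivative in the first variable. -/
def pdx (f : ℝ → ℝ → ℝ) (x y : ℝ) : ℝ := deriv (fun t => f t y) x

/-- Partial derivative in the second variable. -/
def pdy (f : ℝ → ℝ → ℝ) (x y : ℝ) : ℝ := deriv (fun t => f x t) y

lemma hL1x (a b y x : ℝ) : HasDerivAt (fun t => L1 a b t y) (-(1/a)) x := by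
  simp only [L1]
  simpa using (((hasDerivAt_id x).div_const a).const_sub 1).sub_const (y/b)

lemma hL2x (a h b y x : ℝ) : HasDerivAt (fun t => L2 a h b t y) (1/a) x := by
  simp only [L2]
  simpa using ((hasDerivAt_id x).div_const a).sub_const ((1/h-1/b)*y)

lemma hL3x (h y x : ℝ) : HasDerivAt (fun t => L3 h t y) 0 x := by
  simp only [L3]; exact hasDerivAt_const x (y/h)

lemma hL1y (a b x y : ℝ) : HasDerivAt (fun t => L1 a b x t) (-(1/b)) y := by
  simp only [L1]
  simpa using ((hasDerivAt_id y).div_const b).const_sub (1 - x/a)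

lemma hL2y (a h b x y : ℝ) : HasDerivAt (fun t => L2 a h b x t) (-(1/h - 1/b)) y := by
  simp only [L2]
  simpa using (HasDerivAt.const_mul (1/h-1/b) (hasDerivAt_id y)).const_sub (x/a)

lemma hL3y (h x y : ℝ) : HasDerivAt (fun t => L3 h x t) (1/h) y := by
  simp only [L3]
  simpa using (hasDerivAt_id y).div_const h

lemma pdx_Nx2_eq (a h b x y : ℝ) :
    pdx (Nx2 a h b) x y =
      h * L3 h x y * (2 * L2 a h b x y + (1/2) * (L1 a b x y - L2 a h b x y)) / a := by
  have H := ((((hL2x a h b y x).pow 2).mul (hL3x h y x)).add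
    (((HasDerivAt.const_mul (1/2 : ℝ) (hL1x a b y x)).mul (hL2x a h b y x)).mul
      (hL3x h y x))).const_mul h
  rw [pdx]
  rw [show (fun t => Nx2 a h b t y) = (fun t =>
    h * ((L2 a h b t y) ^ 2 * L3 h t y + (1/2) * L1 a b t y * L2 a h b t y * L3 h t y))
    from rfl]
  refine H.deriv.trans ?_
  simp only [Pi.pow_apply, Pi.mul_apply]
  ring

lemma pdx_Nx3_eq (a h b x y : ℝ) :
    pdx (Nx3 a h b) x y = -h * L3 h x y * (L1 a b x y - L2 a h b x y) / a := by
  have H := (((((hL3x h y x).pow 2).mul (hL1x a b y x)).add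
      ((hL2x a h b y x).mul ((hL3x h y x).pow 2))).add
        ((((hL1x a b y x).mul (hL2x a h b y x)).mul (hL3x h y x)))).const_mul (-h)
  rw [pdx]
  rw [show (fun t => Nx3 a h b t y) = (fun t =>
    -h * ((L3 h t y) ^ 2 * L1 a b t y + L2 a h b t y * (L3 h t y) ^ 2
      + L1 a b t y * L2 a h b t y * L3 h t y)) from rfl]
  refine H.deriv.trans ?_
  simp only [Pi.pow_apply, Pi.mul_apply]
  ring

lemma pdy_Nx2_eq (a h b x y : ℝ) :
    pdy (Nx2 a h b) x y =
      h * (2 * L2 a h b x y * (-(1/h - 1/b)) * L3 h x y + L2 a h b x y ^ 2 * (1/h)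
        + (1/2) * ((-(1/b)) * L2 a h b x y + L1 a b x y * (-(1/h - 1/b))) * L3 h x y
        + (1/2) * L1 a b x y * L2 a h b x y * (1/h)) := by
  have H := ((((hL2y a h b x y).pow 2).mul (hL3y h x y)).add
    (((HasDerivAt.const_mul (1/2 : ℝ) (hL1y a b x y)).mul (hL2y a h b x y)).mul
      (hL3y h x y))).const_mul h
  rw [pdy]
  rw [show (fun t => Nx2 a h b x t) = (fun t =>
    h * ((L2 a h b x t) ^ 2 * L3 h x t + (1/2) * L1 a b x t * L2 a h b x t * L3 h x t))
    from rfl]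
  refine H.deriv.trans ?_
  simp only [Pi.pow_apply, Pi.mul_apply]
  ring

lemma pdy_Nx3_eq (a h b x y : ℝ) :
    pdy (Nx3 a h b) x y =
      -h * (2 * L3 h x y * (1/h) * L1 a b x y + L3 h x y ^ 2 * (-(1/b))
        + (-(1/h - 1/b)) * L3 h x y ^ 2 + L2 a h b x y * (2 * L3 h x y * (1/h))
        + ((-(1/b)) * L2 a h b x y + L1 a b x y * (-(1/h - 1/b))) * L3 h x y
        + L1 a b x y * L2 a h b x y * (1/h)) := by
  have H := (((((hL3y h x y).pow 2).mul (hL1y a b x y)).add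
      ((hL2y a h b x y).mul ((hL3y h x y).pow 2))).add
        ((((hL1y a b x y).mul (hL2y a h b x y)).mul (hL3y h x y)))).const_mul (-h)
  rw [pdy]
  rw [show (fun t => Nx3 a h b x t) = (fun t =>
    -h * ((L3 h x t) ^ 2 * L1 a b x t + L2 a h b x t * (L3 h x t) ^ 2
      + L1 a b x t * L2 a h b x t * L3 h x t)) from rfl]
  refine H.deriv.trans ?_
  simp only [Pi.pow_apply, Pi.mul_apply]
  ring

/-- Kronecker delta property of the rotational shape functions `Nx2`, `Nx3`
at the nodes `P1 = (0,0)`, `P2 = (a,0)`, `P3 = (a(1-h/b), h)`. -/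
theorem Nx2_Nx3_kronecker_delta (a h b : ℝ) (ha : 0 < a) (hh : 0 < h) (hb : h ≤ b) :
    (Nx2 a h b 0 0 = 0 ∧ Nx2 a h b a 0 = 0 ∧ Nx2 a h b (a * (1 - h / b)) h = 0) ∧
    (Nx3 a h b 0 0 = 0 ∧ Nx3 a h b a 0 = 0 ∧ Nx3 a h b (a * (1 - h / b)) h = 0) ∧
    (pdx (Nx2 a h b) 0 0 = 0 ∧ pdx (Nx2 a h b) a 0 = 0 ∧
      pdx (Nx2 a h b) (a * (1 - h / b)) h = 0) ∧
    (pdx (Nx3 a h b) 0 0 = 0 ∧ pdx (Nx3 a h b) a 0 = 0 ∧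
      pdx (Nx3 a h b) (a * (1 - h / b)) h = 0) ∧
    (pdy (Nx2 a h b) a 0 = 1 ∧ pdy (Nx2 a h b) 0 0 = 0 ∧
      pdy (Nx2 a h b) (a * (1 - h / b)) h = 0) ∧
    (pdy (Nx3 a h b) (a * (1 - h / b)) h = 1 ∧ pdy (Nx3 a h b) 0 0 = 0 ∧
      pdy (Nx3 a h b) a 0 = 0) := by
  have ha' : a ≠ 0 := ha.ne'
  have hh' : h ≠ 0 := hh.ne'
  have hb' : b ≠ 0 := (lt_of_lt_of_le hh hb).ne'
  -- values of the area coordinates at the three nodes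
  have l1P1 : L1 a b 0 0 = 1 := by simp [L1]
  have l2P1 : L2 a h b 0 0 = 0 := by simp [L2]
  have l3P1 : L3 h 0 0 = 0 := by simp [L3]
  have l1P2 : L1 a b a 0 = 0 := by simp [L1, ha']
  have l2P2 : L2 a h b a 0 = 1 := by simp [L2, ha']
  have l3P2 : L3 h a 0 = 0 := by simp [L3]
  have l1P3 : L1 a b (a * (1 - h / b)) h = 0 := by
    unfold L1; field_simp; ring
  have l2P3 : L2 a h b (a * (1 - h / b)) h = 0 := by
    unfold L2; field_simp; ring
  have l3P3 : L3 h (a * (1 - h / b)) h = 1 := by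
    simp [L3, hh']
  refine ⟨⟨?_, ?_, ?_⟩, ⟨?_, ?_, ?_⟩, ⟨?_, ?_, ?_⟩, ⟨?_, ?_, ?_⟩, ⟨?_, ?_, ?_⟩,
    ⟨?_, ?_, ?_⟩⟩
  · rw [Nx2, l1P1, l2P1, l3P1]; ring
  · rw [Nx2, l1P2, l2P2, l3P2]; ring
  · rw [Nx2, l1P3, l2P3, l3P3]; ring
  · rw [Nx3, l1P1, l2P1, l3P1]; ring
  · rw [Nx3, l1P2, l2P2, l3P2]; ring
  · rw [Nx3, l1P3, l2P3, l3P3]; ring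
  · rw [pdx_Nx2_eq, l1P1, l2P1, l3P1]; ring
  · rw [pdx_Nx2_eq, l1P2, l2P2, l3P2]; ring
  · rw [pdx_Nx2_eq, l1P3, l2P3, l3P3]; ring
  · rw [pdx_Nx3_eq, l1P1, l2P1, l3P1]; ring
  · rw [pdx_Nx3_eq, l1P2, l2P2, l3P2]; ring
  · rw [pdx_Nx3_eq, l1P3, l2P3, l3P3]; ring
  · rw [pdy_Nx2_eq, l1P2, l2P2, l3P2]; field_simp; ring
  · rw [pdy_Nx2_eq, l1P1, l2P1, l3P1]; ring
  · rw [pdy_Nx2_eq, l1P3, l2P3, l3P3]; ring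
  · rw [pdy_Nx3_eq, l1P3, l2P3, l3P3]; field_simp; ring
  · rw [pdy_Nx3_eq, l1P1, l2P1, l3P1]; ring
  · rw [pdy_Nx3_eq, l1P2, l2P2, l3P2]; ring
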